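/- Let I₂ : [0,1] → [0,∞) be nondecreasing and let p > 2. Then ∫₀¹ ((p−1)r^{2p−4} − 1) I₂(r) r dr ≥ 0. -/

import Mathlib

open intervalIntegral

/-- Monotonicity lemma in the proof of Theorem 4 (case p > 2). -/
theorem stmt17 (p : ℝ) (hp : 2 < p) (I₂ : ℝ → ℝ)
    (hmono : MonotoneOn I₂ (Set.Icc 0 1))
    (hnn : ∀ r ∈ Set.Icc (0 : ℝ) 1, 0 ≤ I₂ r) :
    0 ≤ ∫ r in (0 : ℝ)..1, ((p - 1) * r ^ (2 * p - 4) - 1) * I₂ r * r := by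
  set a : ℝ := 2 * p - 4 with ha_def
  have ha : 0 < a := by rw [ha_def]; linarith
  have hp0 : 0 < p - 1 := by linarith
  have hp1 : 1 < p - 1 := by linarith
  set r₀ : ℝ := (p - 1) ^ (-(a⁻¹)) with hr₀_def
  have hr₀pos : 0 < r₀ := Real.rpow_pos_of_pos hp0 _
  have hr₀le : r₀ ≤ 1 :=
    Real.rpow_le_one_of_one_le_of_nonpos hp1.le (neg_nonpos.mpr (inv_nonneg.mpr ha.le))
  have hr₀mem : r₀ ∈ Set.Icc (0 : ℝ) 1 := ⟨hr₀pos.le, hr₀le⟩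
  have hr₀pow : (p - 1) * r₀ ^ a = 1 := by
    rw [hr₀_def, ← Real.rpow_mul hp0.le, neg_mul, inv_mul_cancel₀ ha.ne',
      Real.rpow_neg_one]
    field_simp
  set c : ℝ := I₂ r₀ with hc_def
  -- integrability
  have hwcont : ContinuousOn (fun r : ℝ => ((p - 1) * r ^ a - 1) * r) (Set.uIcc 0 1) := by
    apply ContinuousOn.mul _ continuousOn_id
    apply ContinuousOn.sub _ continuousOn_const
    exact continuousOn_const.mul (continuousOn_id.rpow_const fun x _ => Or.inr ha.le)
  have hw1cont : ContinuousOn (fun r : ℝ => (p - 1) * r ^ a - 1) (Set.uIcc 0 1) := by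
    apply ContinuousOn.sub _ continuousOn_const
    exact continuousOn_const.mul (continuousOn_id.rpow_const fun x _ => Or.inr ha.le)
  have hI : IntervalIntegrable I₂ MeasureTheory.volume 0 1 := by
    apply MonotoneOn.intervalIntegrable
    rwa [Set.uIcc_of_le (by norm_num : (0:ℝ) ≤ 1)]
  have hf : IntervalIntegrable (fun r => ((p - 1) * r ^ a - 1) * I₂ r * r)
      MeasureTheory.volume 0 1 := by
    have h1 : IntervalIntegrable (fun r => ((p - 1) * r ^ a - 1) * I₂ r)
        MeasureTheory.volume 0 1 := hI.continuousOn_mul hw1cont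
    exact h1.mul_continuousOn continuousOn_id
  have hg : IntervalIntegrable (fun r => ((p - 1) * r ^ a - 1) * c * r)
      MeasureTheory.volume 0 1 := by
    apply ContinuousOn.intervalIntegrable
    exact (hw1cont.mul continuousOn_const).mul continuousOn_id
  -- the weight integrates to zero
  have hwint : (∫ r in (0:ℝ)..1, ((p - 1) * r ^ a - 1) * r) = 0 := by
    have hcongr : ∀ r ∈ Set.uIcc (0:ℝ) 1,
        ((p - 1) * r ^ a - 1) * r = (p - 1) * r ^ (a + 1) - r := by
      intro r hr
      rw [Set.uIcc_of_le (by norm_num : (0:ℝ) ≤ 1)] at hr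
      rcases eq_or_lt_of_le hr.1 with h0 | h0
      · simp [← h0, Real.zero_rpow ha.ne', Real.zero_rpow (by linarith : a + 1 ≠ 0)]
      · rw [Real.rpow_add_one h0.ne']
        ring
    rw [intervalIntegral.integral_congr hcongr]
    have hint1 : IntervalIntegrable (fun r : ℝ => (p - 1) * r ^ (a + 1))
        MeasureTheory.volume 0 1 := by
      apply ContinuousOn.intervalIntegrable
      exact continuousOn_const.mul (continuousOn_id.rpow_const fun x _ => Or.inr (by linarith))
    have hint2 : IntervalIntegrable (fun r : ℝ => r) MeasureTheory.volume 0 1 :=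
      (continuous_id).intervalIntegrable 0 1
    rw [intervalIntegral.integral_sub hint1 hint2, intervalIntegral.integral_const_mul,
      integral_rpow (Or.inl (by linarith : (-1:ℝ) < a + 1)), integral_id]
    rw [Real.one_rpow, Real.zero_rpow (by linarith : a + 1 + 1 ≠ 0)]
    rw [ha_def]
    field_simp
    ring_nf
    have hX : (-2 + p * 2) * (-2 + p * 2)⁻¹ = 1 := mul_inv_cancel₀ (by linarith)
    linear_combination hX
  -- pointwise nonnegativity of the difference
  have hpt : ∀ r ∈ Set.Icc (0:ℝ) 1,
      0 ≤ ((p - 1) * r ^ a - 1) * I₂ r * r - ((p - 1) * r ^ a - 1) * c * r := by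
    intro r hr
    have hkey : 0 ≤ ((p - 1) * r ^ a - 1) * (I₂ r - c) := by
      rcases le_total r r₀ with hle | hle
      · have h1 : r ^ a ≤ r₀ ^ a := Real.rpow_le_rpow hr.1 hle ha.le
        have h2 := hmono hr hr₀mem hle
        have hA : (p - 1) * r ^ a - 1 ≤ 0 := by nlinarith
        have hB : I₂ r - c ≤ 0 := by rw [hc_def]; linarith
        nlinarith [mul_nonneg (neg_nonneg.mpr hA) (neg_nonneg.mpr hB)]
      · apply mul_nonneg
        · have : r₀ ^ a ≤ r ^ a := Real.rpow_le_rpow hr₀pos.le hle ha.le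
          nlinarith
        · have := hmono hr₀mem hr hle
          linarith
    have : ((p - 1) * r ^ a - 1) * I₂ r * r - ((p - 1) * r ^ a - 1) * c * r
        = (((p - 1) * r ^ a - 1) * (I₂ r - c)) * r := by ring
    rw [this]
    exact mul_nonneg hkey hr.1
  have hdiff : 0 ≤ (∫ r in (0:ℝ)..1, ((p - 1) * r ^ a - 1) * I₂ r * r)
      - ∫ r in (0:ℝ)..1, ((p - 1) * r ^ a - 1) * c * r := by
    rw [← intervalIntegral.integral_sub hf hg]
    exact intervalIntegral.integral_nonneg (by norm_num) hpt
  have hgval : (∫ r in (0:ℝ)..1, ((p - 1) * r ^ a - 1) * c * r) = 0 := by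
    have : ∀ r : ℝ, ((p - 1) * r ^ a - 1) * c * r = c * (((p - 1) * r ^ a - 1) * r) := by
      intro r; ring
    simp_rw [this]
    rw [intervalIntegral.integral_const_mul, hwint, mul_zero]
  linarith [hdiff, hgval.symm ▸ hdiff]
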